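/- Assume the GSVD setup with G̃ = U Υ̃ Xᵀ and L̃ = V M̃ Xᵀ, let r̃ ∈ ℝ^m, s_i := (Uᵀ r̃)_{i−q}, γ_i := ν_i/μ_i, and for σ > 0 let y(σ) be the minimizer of ‖G̃w − r̃‖₂² + σ⁻² ‖L̃w‖₂². Then ‖L̃ y(σ)‖₂² = σ⁴ Σ_{i=q+1}^{p} γ_i² s_i² / (γ_i² σ² + 1)². -/

import Mathlib

open Matrix

lemma orth_norm {k : ℕ} (U : Matrix (Fin k) (Fin k) ℝ) (hU : Uᵀ * U = 1) (v : Fin k → ℝ) :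
    ∑ i, ((U *ᵥ v) i)^2 = ∑ i, (v i)^2 := by
  have h : (U *ᵥ v) ⬝ᵥ (U *ᵥ v) = v ⬝ᵥ v := by
    rw [show (U *ᵥ v) ⬝ᵥ (U *ᵥ v) = v ⬝ᵥ (Uᵀ *ᵥ (U *ᵥ v)) from
      (by rw [Matrix.dotProduct_mulVec v Uᵀ, Matrix.vecMul_transpose] :
        v ⬝ᵥ (Uᵀ *ᵥ (U *ᵥ v)) = (U *ᵥ v) ⬝ᵥ (U *ᵥ v)).symm,
      Matrix.mulVec_mulVec, hU, Matrix.one_mulVec]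
  simpa [dotProduct, sq] using h

lemma sum_fin_split_ge (m n : ℕ) (hmn : m ≤ n) (h : Fin n → ℝ)
    (h0 : ∀ j : Fin n, (j:ℕ) < n - m → h j = 0) :
    ∑ j, h j = ∑ i : Fin m, h ⟨(n - m) + i, by omega⟩ := by
  have e : (n - m) + m = n := by omega
  rw [← Equiv.sum_comp (finCongr e) h, Fin.sum_univ_add]
  have z1 : ∀ i : Fin (n - m), h (finCongr e (Fin.castAdd m i)) = 0 := by
    intro i; apply h0; simp
  rw [Finset.sum_congr rfl (fun i _ => z1 i)]
  simp only [Finset.sum_const_zero, zero_add]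
  apply Finset.sum_congr rfl
  intro i _
  congr 1

lemma sum_fin_split_lt (p n : ℕ) (hpn : p ≤ n) (h : Fin n → ℝ)
    (h0 : ∀ j : Fin n, p ≤ (j:ℕ) → h j = 0) :
    ∑ j, h j = ∑ i : Fin p, h ⟨(i:ℕ), by omega⟩ := by
  have e : p + (n - p) = n := by omega
  rw [← Equiv.sum_comp (finCongr e) h, Fin.sum_univ_add]
  have z1 : ∀ i : Fin (n - p), h (finCongr e (Fin.natAdd p i)) = 0 := by
    intro i; apply h0; simp
  rw [Finset.sum_congr rfl (fun i _ => z1 i)]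
  simp only [Finset.sum_const_zero, add_zero]
  apply Finset.sum_congr rfl
  intro i _
  congr 1

lemma quad_min {a b s c : ℝ} (ha : 0 < a) (hmin : ∀ t : ℝ, (b*c - s)^2 + a*c^2 ≤ (b*t - s)^2 + a*t^2) :
    c * (b^2 + a) = b * s := by
  have h := hmin (b*s/(b^2+a))
  have hA : 0 < b^2 + a := by positivity
  have key : (b^2+a) * (c - b*s/(b^2+a))^2 ≤ 0 := by
    have expand : (b*c - s)^2 + a*c^2 - ((b*(b*s/(b^2+a)) - s)^2 + a*(b*s/(b^2+a))^2)
        = (b^2+a) * (c - b*s/(b^2+a))^2 := by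
      field_simp
      ring
    nlinarith [h]
  have : (c - b*s/(b^2+a))^2 ≤ 0 := by nlinarith
  have : c - b*s/(b^2+a) = 0 := by nlinarith [sq_nonneg (c - b*s/(b^2+a))]
  field_simp at this
  linarith

lemma quad_min_val {σ b u s c : ℝ} (hσ : 0 < σ) (hb : 0 < b) (hu : 0 < u)
    (hmin : ∀ t : ℝ, (b*c - s)^2 + (σ^2)⁻¹*(u*c)^2 ≤ (b*t - s)^2 + (σ^2)⁻¹*(u*t)^2) :
    (u*c)^2 = σ^4 * ((b/u)^2 * s^2 / ((b/u)^2 * σ^2 + 1)^2) := by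
  have hσ2 : (0:ℝ) < σ^2 := by positivity
  have ha : 0 < (σ^2)⁻¹ * u^2 := by positivity
  have heq : c * (b^2 + (σ^2)⁻¹ * u^2) = b * s := by
    apply quad_min ha
    intro t
    have := hmin t
    nlinarith [this]
  have hD : (0:ℝ) < b^2 + (σ^2)⁻¹*u^2 := by positivity
  have hc : c = b * s / (b^2 + (σ^2)⁻¹*u^2) := by
    field_simp at heq ⊢
    linarith [heq]
  rw [hc]
  have hD2 : b^2 * σ^2 + u^2 ≠ 0 := by positivity
  field_simp
open Matrix

theorem gsvd_regularizer_norm_of_minimizer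
    (m n p : ℕ) (hm : 0 < m) (hmn : m < n) (hpn : p ≤ n) (hnmp : n ≤ m + p)
    (ν μ : ℕ → ℝ)
    (hν0 : ∀ i, n - m ≤ i → i < p → 0 < ν i)
    (hν1 : ∀ i, n - m ≤ i → i < p → ν i < 1)
    (hνmono : ∀ i j, n - m ≤ i → i ≤ j → j < p → ν i ≤ ν j)
    (hμdef : ∀ i, n - m ≤ i → i < p → μ i = Real.sqrt (1 - ν i ^ 2))
    (hνtop : ∀ i, p ≤ i → i < n → ν i = 1)
    (hμlow : ∀ i, i < n - m → μ i = 1)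
    (U : Matrix (Fin m) (Fin m) ℝ) (hU : Uᵀ * U = 1)
    (V : Matrix (Fin p) (Fin p) ℝ) (hV : Vᵀ * V = 1)
    (X : Matrix (Fin n) (Fin n) ℝ) (hX : IsUnit X.det)
    (Υt : Matrix (Fin m) (Fin n) ℝ)
    (hΥt : ∀ (i : Fin m) (j : Fin n), Υt i j = if (j : ℕ) = (n - m) + (i : ℕ) then ν j else 0)
    (Mt : Matrix (Fin p) (Fin n) ℝ)
    (hMt : ∀ (i : Fin p) (j : Fin n), Mt i j = if (j : ℕ) = (i : ℕ) then μ j else 0)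
    (Gt : Matrix (Fin m) (Fin n) ℝ) (hGt : Gt = U * Υt * Xᵀ)
    (Lt : Matrix (Fin p) (Fin n) ℝ) (hLt : Lt = V * Mt * Xᵀ)
    (rt : Fin m → ℝ)
    (σ : ℝ) (hσ : 0 < σ) (y : Fin n → ℝ)
    (hy : ∀ w : Fin n → ℝ,
      (∑ i, ((Gt *ᵥ y - rt) i) ^ 2) + (σ ^ 2)⁻¹ * (∑ i, ((Lt *ᵥ y) i) ^ 2)
        ≤ (∑ i, ((Gt *ᵥ w - rt) i) ^ 2) + (σ ^ 2)⁻¹ * (∑ i, ((Lt *ᵥ w) i) ^ 2)) :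
    (∑ i, ((Lt *ᵥ y) i) ^ 2)
      = σ ^ 4 * ∑ i : Fin m, (if (n - m) + (i : ℕ) < p
          then (ν ((n - m) + (i : ℕ)) / μ ((n - m) + (i : ℕ))) ^ 2 * ((Uᵀ *ᵥ rt) i) ^ 2
            / ((ν ((n - m) + (i : ℕ)) / μ ((n - m) + (i : ℕ))) ^ 2 * σ ^ 2 + 1) ^ 2
          else 0) := by
  have hmp : n - m ≤ p := by omega
  set s : Fin m → ℝ := Uᵀ *ᵥ rt with hs
  set z : Fin n → ℝ := Xᵀ *ᵥ y with hz
  set φ : Fin n → ℝ → ℝ := fun j t =>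
    (if hq : n - m ≤ (j : ℕ) then
        (ν j * t - s ⟨(j : ℕ) - (n - m), by omega⟩) ^ 2
      else 0)
    + (σ ^ 2)⁻¹ * (if (j : ℕ) < p then (μ j * t) ^ 2 else 0) with hφ
  have hUUt : U * Uᵀ = 1 := mul_eq_one_comm.mp hU
  have hUs : U *ᵥ s = rt := by
    rw [hs, Matrix.mulVec_mulVec, hUUt, Matrix.one_mulVec]
  -- the objective in diagonal coordinates
  have hobj : ∀ w : Fin n → ℝ,
      (∑ i, ((Gt *ᵥ w - rt) i) ^ 2) + (σ ^ 2)⁻¹ * (∑ i, ((Lt *ᵥ w) i) ^ 2)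
        = ∑ j, φ j ((Xᵀ *ᵥ w) j) := by
    intro w
    have h1 : Gt *ᵥ w - rt = U *ᵥ (Υt *ᵥ (Xᵀ *ᵥ w) - s) := by
      rw [hGt, ← Matrix.mulVec_mulVec, ← Matrix.mulVec_mulVec, Matrix.mulVec_sub, hUs]
    have h2 : Lt *ᵥ w = V *ᵥ (Mt *ᵥ (Xᵀ *ᵥ w)) := by
      rw [hLt, ← Matrix.mulVec_mulVec, ← Matrix.mulVec_mulVec]
    rw [h1, h2, orth_norm U hU, orth_norm V hV]
    have hΥv : ∀ i : Fin m, (Υt *ᵥ (Xᵀ *ᵥ w)) i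
        = ν ((n - m) + (i : ℕ)) * (Xᵀ *ᵥ w) ⟨(n - m) + (i : ℕ), by omega⟩ := by
      intro i
      show (∑ j, Υt i j * (Xᵀ *ᵥ w) j) = _
      rw [Finset.sum_eq_single (⟨(n - m) + (i : ℕ), by omega⟩ : Fin n)]
      · rw [hΥt]; simp
      · intro j _ hj
        rw [hΥt]
        have : ¬((j : ℕ) = (n - m) + (i : ℕ)) := fun hc => hj (Fin.ext hc)
        simp [this]
      · simp
    have hMv : ∀ i : Fin p, (Mt *ᵥ (Xᵀ *ᵥ w)) i
        = μ (i : ℕ) * (Xᵀ *ᵥ w) ⟨(i : ℕ), by omega⟩ := by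
      intro i
      show (∑ j, Mt i j * (Xᵀ *ᵥ w) j) = _
      rw [Finset.sum_eq_single (⟨(i : ℕ), by omega⟩ : Fin n)]
      · rw [hMt]; simp
      · intro j _ hj
        rw [hMt]
        have : ¬((j : ℕ) = (i : ℕ)) := fun hc => hj (Fin.ext hc)
        simp [this]
      · simp
    have hA : (∑ i, ((Υt *ᵥ (Xᵀ *ᵥ w) - s) i) ^ 2)
        = ∑ j : Fin n, (if hq : n - m ≤ (j : ℕ) then
            (ν j * (Xᵀ *ᵥ w) j - s ⟨(j : ℕ) - (n - m), by omega⟩) ^ 2 else 0) := by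
      rw [sum_fin_split_ge m n hmn.le _ (fun j hj => by rw [dif_neg (by omega)])]
      apply Finset.sum_congr rfl
      intro i _
      rw [Pi.sub_apply, hΥv i, dif_pos (by simp)]
      congr 2
      apply congrArg
      apply Fin.ext
      simp
    have hB : (∑ i, ((Mt *ᵥ (Xᵀ *ᵥ w)) i) ^ 2)
        = ∑ j : Fin n, (if (j : ℕ) < p then (μ j * (Xᵀ *ᵥ w) j) ^ 2 else 0) := by
      rw [sum_fin_split_lt p n hpn _ (fun j hj => by rw [if_neg (by omega)])]
      apply Finset.sum_congr rfl
      intro i _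
      rw [hMv i, if_pos (by simpa using i.isLt)]
    rw [hA, hB, hφ, Finset.mul_sum, ← Finset.sum_add_distrib]
  -- z is a coordinatewise minimizer
  have hzmin : ∀ (j : Fin n) (t : ℝ), φ j (z j) ≤ φ j t := by
    intro j t
    have hXt : IsUnit (Xᵀ).det := by rwa [Matrix.det_transpose]
    set w : Fin n → ℝ := (Xᵀ)⁻¹ *ᵥ (Function.update z j t) with hw
    have hzw : Xᵀ *ᵥ w = Function.update z j t := by
      rw [hw, Matrix.mulVec_mulVec, Matrix.mul_nonsing_inv _ hXt, Matrix.one_mulVec]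
    have h := hy w
    rw [hobj y, hobj w, hzw, ← hz] at h
    have hupd : ∀ j' : Fin n, φ j' (Function.update z j t j')
        = Function.update (fun j' => φ j' (z j')) j (φ j t) j' := by
      intro j'
      by_cases hjj : j' = j
      · subst hjj; simp
      · simp [Function.update_of_ne hjj]
    rw [Finset.sum_congr rfl (fun j' _ => hupd j'),
      Finset.sum_update_of_mem (Finset.mem_univ j),
      ← Finset.add_sum_erase _ (fun j' => φ j' (z j')) (Finset.mem_univ j),
      Finset.erase_eq] at h
    linarith
  -- low coordinates vanish
  have hzlow : ∀ j : Fin n, (j : ℕ) < n - m → z j = 0 := by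
    intro j hj
    have h := hzmin j 0
    rw [hφ] at h
    simp only [dif_neg (by omega : ¬ (n - m ≤ (j:ℕ))), if_pos (by omega : (j:ℕ) < p),
      hμlow _ hj] at h
    have hσ2 : (0:ℝ) < (σ^2)⁻¹ := by positivity
    have h2 : (z j)^2 = 0 := le_antisymm (by nlinarith) (sq_nonneg _)
    exact pow_eq_zero_iff two_ne_zero |>.mp h2
  -- final computation
  have hLy : (∑ i, ((Lt *ᵥ y) i) ^ 2)
      = ∑ j : Fin n, (if (j : ℕ) < p then (μ j * z j) ^ 2 else 0) := by
    have h2 : Lt *ᵥ y = V *ᵥ (Mt *ᵥ z) := by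
      rw [hLt, hz, ← Matrix.mulVec_mulVec, ← Matrix.mulVec_mulVec]
    rw [h2, orth_norm V hV]
    have hMv : ∀ i : Fin p, (Mt *ᵥ z) i = μ (i : ℕ) * z ⟨(i : ℕ), by omega⟩ := by
      intro i
      show (∑ j, Mt i j * z j) = _
      rw [Finset.sum_eq_single (⟨(i : ℕ), by omega⟩ : Fin n)]
      · rw [hMt]; simp
      · intro j _ hj
        rw [hMt]
        have : ¬((j : ℕ) = (i : ℕ)) := fun hc => hj (Fin.ext hc)
        simp [this]
      · simp
    rw [sum_fin_split_lt p n hpn _ (fun j hj => by rw [if_neg (by omega)])]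
    apply Finset.sum_congr rfl
    intro i _
    rw [hMv i, if_pos (by simpa using i.isLt)]
  rw [hLy, sum_fin_split_ge m n hmn.le _ ?hvanish, Finset.mul_sum]
  case hvanish =>
    intro j hj
    rw [if_pos (by omega), hzlow j hj, mul_zero]
    ring
  apply Finset.sum_congr rfl
  intro i _
  by_cases hip : (n - m) + (i : ℕ) < p
  · rw [if_pos (by simpa using hip), if_pos hip]
    -- main value computation
    set J : Fin n := ⟨(n - m) + (i : ℕ), by omega⟩ with hJ
    have hνJ : 0 < ν ((n-m) + (i:ℕ)) := hν0 _ (by omega) hip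
    have hν1J : ν ((n-m) + (i:ℕ)) < 1 := hν1 _ (by omega) hip
    have hμJ : 0 < μ ((n-m) + (i:ℕ)) := by
      rw [hμdef _ (by omega) hip]
      apply Real.sqrt_pos.mpr
      nlinarith
    have hmin' : ∀ t : ℝ, (ν ((n-m)+(i:ℕ)) * z J - s i) ^ 2 + (σ^2)⁻¹ * (μ ((n-m)+(i:ℕ)) * z J) ^ 2
        ≤ (ν ((n-m)+(i:ℕ)) * t - s i) ^ 2 + (σ^2)⁻¹ * (μ ((n-m)+(i:ℕ)) * t) ^ 2 := by
      intro t
      have h := hzmin J t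
      rw [hφ] at h
      simp only [dif_pos (show n - m ≤ (J:ℕ) by simp [hJ]), if_pos (show (J:ℕ) < p by simpa [hJ] using hip)] at h
      have hsi : (⟨(J:ℕ) - (n-m), by omega⟩ : Fin m) = i := by
        apply Fin.ext; simp [hJ]
      rw [hsi] at h
      convert h using 3 <;> simp [hJ]
    have := quad_min_val hσ hνJ hμJ hmin'
    convert this using 2 <;> simp [hJ]
  · rw [if_neg (by simpa using hip), if_neg hip, mul_zero]
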